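/- arXiv:2405.09727 — 7 statements merged into one kernel-verified Lean document; each statement's English description precedes it below -/
import Mathlib

section
/- Let G=(V,E) be a hypergraph, let T be a nonempty finite index set, and let e_0 and e_k (k in T) be edges of G such that for every k in T one has |(e_0 ∩ e_k) \ ∪_{j in T\{k}} (e_0 ∩ e_j)| ≥ 2. Then every point z of the multilinear set S(G) satisfies the flower inequality centered at e_0 with neighbors e_k, k in T: ∑_{v ∈ e_0 \ ∪_{k∈T} e_k} z_v + ∑_{k∈T} z_{e_k} − z_{e_0} ≤ |e_0 \ ∪_{k∈T} e_k| + |T| − 1. -/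
open Finset

/-- The multilinear set of a hypergraph with node set `V` (all of the type) and edge set `E`.
Points are indexed by `Finset V`: the coordinate of a node `v` is `z {v}` and the coordinate of
an edge `e` is `z e`. -/
def MultilinearSet {V : Type} [DecidableEq V] (E : Finset (Finset V)) :
    Set (Finset V → ℝ) :=
  {z | ∃ x : V → ℝ, (∀ v, x v = 0 ∨ x v = 1) ∧ (∀ v, z {v} = x v) ∧
        ∀ e ∈ E, z e = ∏ v ∈ e, x v}

/-- every point of the multilinear set satisfies each flower inequality. -/
theorem flower_inequality_valid
    {V : Type} [Fintype V] [DecidableEq V]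
    (E : Finset (Finset V)) (hE : ∀ e ∈ E, 2 ≤ e.card)
    {T : Type} [Fintype T] [DecidableEq T] [Nonempty T]
    (e0 : Finset V) (he0 : e0 ∈ E)
    (ek : T → Finset V) (hek : ∀ k, ek k ∈ E)
    (hflower : ∀ k : T,
      2 ≤ ((e0 ∩ ek k) \ (Finset.univ.erase k).biUnion (fun j => e0 ∩ ek j)).card)
    (z : Finset V → ℝ) (hz : z ∈ MultilinearSet E) :
    (∑ v ∈ e0 \ Finset.univ.biUnion ek, z {v}) + (∑ k : T, z (ek k)) - z e0 ≤
      ((e0 \ Finset.univ.biUnion ek).card : ℝ) + (Fintype.card T : ℝ) - 1 := by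
  obtain ⟨x, hx01, hxv, hze⟩ := hz
  have hx0 : ∀ v, 0 ≤ x v := fun v => by rcases hx01 v with h | h <;> simp [h]
  have hx1 : ∀ v, x v ≤ 1 := fun v => by rcases hx01 v with h | h <;> simp [h]
  set R := e0 \ Finset.univ.biUnion ek with hR
  have hsumR : ∀ s : Finset V, (∑ v ∈ s, x v) ≤ (s.card : ℝ) := by
    intro s
    calc ∑ v ∈ s, x v ≤ ∑ _v ∈ s, (1 : ℝ) := Finset.sum_le_sum fun v _ => hx1 v
      _ = s.card := by simp
  have hPle : ∀ k, z (ek k) ≤ 1 := fun k => by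
    rw [hze _ (hek k)]
    exact Finset.prod_le_one (fun v _ => hx0 v) (fun v _ => hx1 v)
  have hPge : ∀ k, 0 ≤ z (ek k) := fun k => by
    rw [hze _ (hek k)]
    exact Finset.prod_nonneg fun v _ => hx0 v
  have hsumT : (∑ k : T, z (ek k)) ≤ (Fintype.card T : ℝ) := by
    calc (∑ k : T, z (ek k)) ≤ ∑ _k : T, (1 : ℝ) := Finset.sum_le_sum fun k _ => hPle k
      _ = (Fintype.card T : ℝ) := by simp
  rw [hze e0 he0]
  simp only [hxv]
  by_cases hP0 : ∏ v ∈ e0, x v = 0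
  · obtain ⟨v0, hv0e, hv00⟩ := Finset.prod_eq_zero_iff.mp hP0
    rw [hP0]
    by_cases hv0R : v0 ∈ R
    · have hRsum : (∑ v ∈ R, x v) ≤ (R.card : ℝ) - 1 := by
        rw [← Finset.add_sum_erase _ _ hv0R, hv00, zero_add]
        have h1 : ((R.erase v0).card : ℝ) = (R.card : ℝ) - 1 := by
          have h2 : (R.erase v0).card + 1 = R.card := Finset.card_erase_add_one hv0R
          have := congrArg (Nat.cast : ℕ → ℝ) h2
          push_cast at this
          linarith
        calc (∑ v ∈ R.erase v0, x v) ≤ ((R.erase v0).card : ℝ) := hsumR _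
          _ = (R.card : ℝ) - 1 := h1
      linarith [hsumT]
    · have hmem : v0 ∈ Finset.univ.biUnion ek := by
        by_contra h
        exact hv0R (Finset.mem_sdiff.mpr ⟨hv0e, h⟩)
      obtain ⟨k0, -, hk0⟩ := Finset.mem_biUnion.mp hmem
      have hPk0 : z (ek k0) = 0 := by
        rw [hze _ (hek k0)]
        exact Finset.prod_eq_zero hk0 hv00
      have hTsum : (∑ k : T, z (ek k)) ≤ (Fintype.card T : ℝ) - 1 := by
        rw [← Finset.add_sum_erase _ _ (Finset.mem_univ k0), hPk0, zero_add]
        have h1 : ((Finset.univ.erase k0).card : ℝ) = (Fintype.card T : ℝ) - 1 := by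
          have h2 : (Finset.univ.erase k0).card + 1 = (Finset.univ : Finset T).card :=
            Finset.card_erase_add_one (Finset.mem_univ k0)
          have := congrArg (Nat.cast : ℕ → ℝ) h2
          push_cast at this
          rw [Finset.card_univ] at this
          linarith
        calc (∑ k ∈ Finset.univ.erase k0, z (ek k))
            ≤ ∑ _k ∈ Finset.univ.erase k0, (1 : ℝ) :=
              Finset.sum_le_sum fun k _ => hPle k
          _ = ((Finset.univ.erase k0).card : ℝ) := by simp
          _ = (Fintype.card T : ℝ) - 1 := h1
      linarith [hsumR R]
  · have hP1 : ∏ v ∈ e0, x v = 1 :=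
      Finset.prod_eq_one fun v hv =>
        (hx01 v).resolve_left fun h => hP0 (Finset.prod_eq_zero hv h)
    rw [hP1]
    linarith [hsumR R, hsumT]
end

section
/- Let G=(V,E) be the UGM hypergraph of a finite family 𝒞 of cliques, i.e. E = ∪_{C∈𝒞} {e ⊆ C : |e| ≥ 2}. Suppose z satisfies the standard linearization of S(G) and every flower inequality whose edges satisfy ∪_{k∈T} e_k ∪ e_0 ⊆ C for some C ∈ 𝒞. Then z satisfies every flower inequality of G; equivalently, the flower relaxation MP^F(G) (standard linearization plus all flower inequalities) coincides with the polytope MP^{F'}(G) obtained by adding to the standard linearization only those flower inequalities with ∪_{k∈T} e_k ∪ e_0 ⊆ C for some C ∈ 𝒞. -/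
open Finset

/-- The edge set of the UGM hypergraph of a clique family `𝒞`:
all subsets of some clique of cardinality at least two. -/
def ugmEdges {V : Type} [DecidableEq V] (𝒞 : Finset (Finset V)) : Finset (Finset V) :=
  𝒞.biUnion fun C => C.powerset.filter fun e => 2 ≤ e.card

/-- The standard linearization of the multilinear set of the hypergraph `(V, E)`
(node set the whole type `V`). -/
def StdLin {V : Type} [Fintype V] [DecidableEq V] (E : Finset (Finset V))
    (z : Finset V → ℝ) : Prop :=
  (∀ v : V, z {v} ≤ 1) ∧
    ∀ e ∈ E, 0 ≤ z e ∧ (∑ v ∈ e, z {v}) - (e.card : ℝ) + 1 ≤ z e ∧ ∀ v ∈ e, z e ≤ z {v}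

/-- The condition on a center `e0` and a (nonempty) set `N` of neighbor edges under which
the flower inequality is defined:
`|(e0 ∩ f) \ ∪_{g ∈ N, g ≠ f} (e0 ∩ g)| ≥ 2` for every `f ∈ N`. -/
def FlowerCond {V : Type} [DecidableEq V] (e0 : Finset V) (N : Finset (Finset V)) : Prop :=
  N.Nonempty ∧ ∀ f ∈ N, 2 ≤ ((e0 ∩ f) \ (N.erase f).biUnion (fun g => e0 ∩ g)).card

/-- The flower inequality centered at `e0` with neighbors `N`. -/
def FlowerIneq {V : Type} [DecidableEq V] (z : Finset V → ℝ) (e0 : Finset V)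
    (N : Finset (Finset V)) : Prop :=
  (∑ v ∈ e0 \ N.biUnion id, z {v}) + (∑ f ∈ N, z f) - z e0 ≤
    ((e0 \ N.biUnion id).card : ℝ) + (N.card : ℝ) - 1

/-- for a UGM hypergraph, the flower relaxation coincides with the polytope
obtained from the standard linearization by adding only the flower inequalities whose
edges all lie in a single clique. -/
theorem flower_relaxation_eq_restricted {V : Type} [Fintype V] [DecidableEq V]
    (𝒞 : Finset (Finset V)) :
    {z : Finset V → ℝ | StdLin (ugmEdges 𝒞) z ∧
        ∀ e0 ∈ ugmEdges 𝒞, ∀ N ⊆ ugmEdges 𝒞, FlowerCond e0 N → FlowerIneq z e0 N} =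
      {z : Finset V → ℝ | StdLin (ugmEdges 𝒞) z ∧
        ∀ e0 ∈ ugmEdges 𝒞, ∀ N ⊆ ugmEdges 𝒞, FlowerCond e0 N →
          (∃ C ∈ 𝒞, N.biUnion id ∪ e0 ⊆ C) → FlowerIneq z e0 N} := by
  ext z
  simp only [Set.mem_setOf_eq]
  constructor
  · rintro ⟨hstd, hfl⟩
    exact ⟨hstd, fun e0 he0 N hN hc _ => hfl e0 he0 N hN hc⟩
  rintro ⟨hstd, hfl⟩
  refine ⟨hstd, fun e0 he0 N hN hc => ?_⟩
  obtain ⟨C0, hC0, he0C0, he0card⟩ :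
      ∃ C ∈ 𝒞, e0 ⊆ C ∧ 2 ≤ e0.card := by
    simpa [ugmEdges, Finset.mem_biUnion, Finset.mem_filter, Finset.mem_powerset,
      and_assoc] using he0
  -- each intersection has card ≥ 2
  have hcard2 : ∀ f ∈ N, 2 ≤ (e0 ∩ f).card := by
    intro f hf
    exact le_trans (hc.2 f hf) (Finset.card_le_card Finset.sdiff_subset)
  -- intersections are edges
  have hEint : ∀ f ∈ N, e0 ∩ f ∈ ugmEdges 𝒞 := by
    intro f hf
    refine Finset.mem_biUnion.2 ⟨C0, hC0, Finset.mem_filter.2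
      ⟨Finset.mem_powerset.2 (le_trans Finset.inter_subset_left he0C0), hcard2 f hf⟩⟩
  -- injectivity of f ↦ e0 ∩ f on N
  have hinj : ∀ f ∈ N, ∀ g ∈ N, e0 ∩ f = e0 ∩ g → f = g := by
    intro f hf g hg hfg
    by_contra hne
    have hg' : g ∈ N.erase f := Finset.mem_erase.2 ⟨fun h => hne h.symm, hg⟩
    have hsub : (e0 ∩ f) \ (N.erase f).biUnion (fun g => e0 ∩ g) ⊆
        (e0 ∩ f) \ (e0 ∩ g) := by
      exact Finset.sdiff_subset_sdiff (le_refl _)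
        (Finset.subset_biUnion_of_mem (fun g => e0 ∩ g) hg')
    rw [← hfg, Finset.sdiff_self] at hsub
    have := le_trans (hc.2 f hf) (Finset.card_le_card hsub)
    simp at this
  set N' : Finset (Finset V) := N.image (fun f => e0 ∩ f) with hN'
  have hN'sub : N' ⊆ ugmEdges 𝒞 := by
    intro f' hf'
    obtain ⟨f, hf, rfl⟩ := Finset.mem_image.1 hf'
    exact hEint f hf
  have hbi : N'.biUnion id = e0 ∩ N.biUnion id := by
    ext x
    simp only [hN', Finset.mem_biUnion, Finset.mem_image, Finset.mem_inter, id]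
    constructor
    · rintro ⟨f', ⟨f, hf, rfl⟩, hx⟩
      exact ⟨(Finset.mem_inter.1 hx).1, f, hf, (Finset.mem_inter.1 hx).2⟩
    · rintro ⟨hx, f, hf, hxf⟩
      exact ⟨e0 ∩ f, ⟨f, hf, rfl⟩, Finset.mem_inter.2 ⟨hx, hxf⟩⟩
  have hsd : e0 \ N'.biUnion id = e0 \ N.biUnion id := by
    rw [hbi]
    ext x; simp only [Finset.mem_sdiff, Finset.mem_inter, not_and]; tauto
  have hcardN' : N'.card = N.card := Finset.card_image_of_injOn hinj
  have hsum : ∑ f' ∈ N', z f' = ∑ f ∈ N, z (e0 ∩ f) :=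
    Finset.sum_image hinj
  -- flower condition for N'
  have hcond' : FlowerCond e0 N' := by
    refine ⟨hc.1.image _, ?_⟩
    intro f' hf'
    obtain ⟨f, hf, rfl⟩ := Finset.mem_image.1 hf'
    have herase : N'.erase (e0 ∩ f) = (N.erase f).image (fun g => e0 ∩ g) := by
      ext x
      simp only [Finset.mem_erase, hN', Finset.mem_image]
      constructor
      · rintro ⟨hne, g, hg, rfl⟩
        exact ⟨g, ⟨fun h => hne (by rw [h]), hg⟩, rfl⟩
      · rintro ⟨g, ⟨hgf, hgN⟩, rfl⟩
        exact ⟨fun h => hgf (hinj g hgN f hf h), g, hgN, rfl⟩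
    have hbi2 : (N'.erase (e0 ∩ f)).biUnion (fun g => e0 ∩ g) =
        (N.erase f).biUnion (fun g => e0 ∩ g) := by
      rw [herase]
      ext x
      simp only [Finset.mem_biUnion, Finset.mem_image, Finset.mem_inter]
      constructor
      · rintro ⟨g', ⟨g, hg, rfl⟩, hx1, hx2⟩
        exact ⟨g, hg, hx1, (Finset.mem_inter.1 hx2).2⟩
      · rintro ⟨g, hg, hx1, hx2⟩
        exact ⟨e0 ∩ g, ⟨g, hg, rfl⟩, hx1, Finset.mem_inter.2 ⟨hx1, hx2⟩⟩
    have h1 : e0 ∩ (e0 ∩ f) = e0 ∩ f := by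
      rw [← Finset.inter_assoc, Finset.inter_self]
    rw [hbi2, h1]
    exact hc.2 f hf
  -- restricted flower inequality for N'
  have hflN' : FlowerIneq z e0 N' := by
    refine hfl e0 he0 N' hN'sub hcond' ⟨C0, hC0, ?_⟩
    refine Finset.union_subset ?_ he0C0
    rw [hbi]
    exact le_trans Finset.inter_subset_left he0C0
  -- z f ≤ z (e0 ∩ f) for each f ∈ N
  have hle : ∀ f ∈ N, z f ≤ z (e0 ∩ f) := by
    intro f hf
    have hfE : f ∈ ugmEdges 𝒞 := hN hf
    obtain ⟨Cf, hCf, hfCf, _⟩ : ∃ C ∈ 𝒞, f ⊆ C ∧ 2 ≤ f.card := by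
      simpa [ugmEdges, Finset.mem_biUnion, Finset.mem_filter, Finset.mem_powerset,
        and_assoc] using hfE
    have hsing : ({f} : Finset (Finset V)) ⊆ ugmEdges 𝒞 := by
      simpa using hfE
    have hcondf : FlowerCond (e0 ∩ f) {f} := by
      constructor
      · exact Finset.singleton_nonempty f
      · intro g hg
        rw [Finset.mem_singleton] at hg
        subst hg
        rw [Finset.erase_singleton]
        simp only [Finset.biUnion_empty, Finset.sdiff_empty]
        rw [Finset.inter_assoc, Finset.inter_self]
        exact hcard2 g hf
    have hiq := hfl (e0 ∩ f) (hEint f hf) {f} hsing hcondf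
      ⟨Cf, hCf, by
        simp only [Finset.singleton_biUnion, id]
        exact Finset.union_subset hfCf (le_trans Finset.inter_subset_right hfCf)⟩
    unfold FlowerIneq at hiq
    have hempty : (e0 ∩ f) \ ({f} : Finset (Finset V)).biUnion id = ∅ := by
      simp [Finset.sdiff_eq_empty_iff_subset]
    rw [hempty] at hiq
    simp at hiq
    linarith
  -- combine
  unfold FlowerIneq at hflN' ⊢
  rw [hsd, hcardN', hsum] at hflN'
  have hsumle : ∑ f ∈ N, z f ≤ ∑ f ∈ N, z (e0 ∩ f) :=
    Finset.sum_le_sum hle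
  linarith
end

section
/- Let G=(V,E) be the UGM hypergraph of a finite family 𝒞 of cliques. Suppose z lies in the flower relaxation MP^F(G) and satisfies every running intersection inequality whose edges satisfy ∪_{k∈T} e_k ∪ e_0 ⊆ C for some C ∈ 𝒞. Then z satisfies every running intersection inequality of G; equivalently, the running intersection relaxation MP^{RI}(G) (flower relaxation plus all running intersection inequalities) coincides with the polytope MP^{RI'}(G) obtained by adding to the flower relaxation only those running intersection inequalities with ∪_{k∈T} e_k ∪ e_0 ⊆ C for some C ∈ 𝒞. -/
open Finset

/-- The set `N(e0 ∩ ek k) = (e0 ∩ ek k) ∩ (∪_{i < k} (e0 ∩ ek i))` induced by the ordering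
`e0 ∩ ek 0, …, e0 ∩ ek (m-1)`. -/
def Nset {V : Type} [DecidableEq V] {m : ℕ} (e0 : Finset V) (ek : Fin m → Finset V)
    (k : Fin m) : Finset V :=
  (e0 ∩ ek k) ∩ (Finset.univ.filter fun i : Fin m => i < k).biUnion fun i => e0 ∩ ek i

/-- Conditions under which the running intersection inequality with center `e0`, ordered
neighbors `ek 0, …, ek (m-1)` and choices `w k ⊆ N(e0 ∩ ek k)` is defined:
(i) `|e0 ∩ ek k| ≥ 2`; (ii) the sets `e0 ∩ ek k` are pairwise non-nested;
(iii) the given ordering is a running intersection ordering of `{e0 ∩ ek k : k}`;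
and each `w k` is a subset of `N(e0 ∩ ek k)` that is empty, a singleton node, or an edge. -/
def RICond {V : Type} [DecidableEq V] {m : ℕ} (E : Finset (Finset V))
    (e0 : Finset V) (ek : Fin m → Finset V) (w : Fin m → Finset V) : Prop :=
  0 < m ∧
  (∀ k, 2 ≤ (e0 ∩ ek k).card) ∧
  (∀ k k' : Fin m, k ≠ k' → ¬ e0 ∩ ek k ⊆ e0 ∩ ek k') ∧
  (∀ k : Fin m, (0 : ℕ) < (k : ℕ) → ∃ j : Fin m, j < k ∧ Nset e0 ek k ⊆ e0 ∩ ek j) ∧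
  (∀ k, w k ⊆ Nset e0 ek k ∧ (w k = ∅ ∨ (w k).card = 1 ∨ w k ∈ E))

/-- The running intersection inequality, with the convention `z_∅ := 0`. -/
def RIIneq {V : Type} [DecidableEq V] {m : ℕ} (z : Finset V → ℝ)
    (e0 : Finset V) (ek : Fin m → Finset V) (w : Fin m → Finset V) : Prop :=
  -(∑ k : Fin m, if w k = ∅ then (0 : ℝ) else z (w k)) +
      (∑ v ∈ e0 \ Finset.univ.biUnion ek, z {v}) + (∑ k : Fin m, z (ek k)) - z e0 ≤
    ((e0 \ Finset.univ.biUnion ek).card : ℝ) +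
      ((Finset.univ.filter fun k : Fin m => Nset e0 ek k = ∅).card : ℝ) - 1

/-- for a UGM hypergraph, the running intersection relaxation coincides with the
polytope obtained from the flower relaxation by adding only the running intersection
inequalities whose edges all lie in a single clique. -/
theorem running_intersection_relaxation_eq_restricted {V : Type} [Fintype V] [DecidableEq V]
    (𝒞 : Finset (Finset V)) :
    {z : Finset V → ℝ | (StdLin (ugmEdges 𝒞) z ∧
        ∀ e0 ∈ ugmEdges 𝒞, ∀ N ⊆ ugmEdges 𝒞, FlowerCond e0 N → FlowerIneq z e0 N) ∧
        ∀ (m : ℕ) (e0 : Finset V) (ek : Fin m → Finset V) (w : Fin m → Finset V),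
          e0 ∈ ugmEdges 𝒞 → (∀ k, ek k ∈ ugmEdges 𝒞) → RICond (ugmEdges 𝒞) e0 ek w →
            RIIneq z e0 ek w} =
      {z : Finset V → ℝ | (StdLin (ugmEdges 𝒞) z ∧
        ∀ e0 ∈ ugmEdges 𝒞, ∀ N ⊆ ugmEdges 𝒞, FlowerCond e0 N → FlowerIneq z e0 N) ∧
        ∀ (m : ℕ) (e0 : Finset V) (ek : Fin m → Finset V) (w : Fin m → Finset V),
          e0 ∈ ugmEdges 𝒞 → (∀ k, ek k ∈ ugmEdges 𝒞) → RICond (ugmEdges 𝒞) e0 ek w →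
            (∃ C ∈ 𝒞, Finset.univ.biUnion ek ∪ e0 ⊆ C) → RIIneq z e0 ek w} := by
  ext z
  simp only [Set.mem_setOf_eq]
  constructor
  · rintro ⟨hbase, hri⟩
    exact ⟨hbase, fun m e0 ek w h0 hk hc _ => hri m e0 ek w h0 hk hc⟩
  · rintro ⟨⟨hstd, hflow⟩, hri⟩
    refine ⟨⟨hstd, hflow⟩, ?_⟩
    intro m e0 ek w he0 hek hcond
    obtain ⟨C, hC, he0C, hcard⟩ : ∃ C ∈ 𝒞, e0 ⊆ C ∧ 2 ≤ e0.card := by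
      simpa [ugmEdges, Finset.mem_biUnion, Finset.mem_filter, Finset.mem_powerset] using he0
    set ek' : Fin m → Finset V := fun k => e0 ∩ ek k with hek'
    have hinter : ∀ k, e0 ∩ ek' k = e0 ∩ ek k := fun k => by
      simp [hek', ← Finset.inter_assoc]
    have hmem' : ∀ k, ek' k ∈ ugmEdges 𝒞 := by
      intro k
      simp only [ugmEdges, Finset.mem_biUnion, Finset.mem_filter, Finset.mem_powerset]
      exact ⟨C, hC, Finset.inter_subset_left.trans he0C, hcond.2.1 k⟩
    have hN : ∀ k, Nset e0 ek' k = Nset e0 ek k := by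
      intro k; unfold Nset; simp only [hinter]
    have hsd : e0 \ Finset.univ.biUnion ek' = e0 \ Finset.univ.biUnion ek := by
      ext v
      simp only [Finset.mem_sdiff, Finset.mem_biUnion, Finset.mem_univ, true_and, hek',
        Finset.mem_inter]
      exact ⟨fun ⟨h1, h2⟩ => ⟨h1, fun h => h2 (h.imp fun a ha => ⟨h1, ha⟩)⟩,
        fun ⟨h1, h2⟩ => ⟨h1, fun h => h2 (h.imp fun a ha => ha.2)⟩⟩
    have hcond' : RICond (ugmEdges 𝒞) e0 ek' w := by
      obtain ⟨h1, h2, h3, h4, h5⟩ := hcond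
      refine ⟨h1, fun k => by rw [hinter]; exact h2 k,
        fun k k' hkk => by rw [hinter, hinter]; exact h3 k k' hkk,
        fun k hk => ?_, fun k => ⟨by rw [hN]; exact (h5 k).1, (h5 k).2⟩⟩
      obtain ⟨j, hj, hsub⟩ := h4 k hk
      exact ⟨j, hj, by rw [hN, hinter]; exact hsub⟩
    have hri' := hri m e0 ek' w he0 hmem' hcond'
      ⟨C, hC, Finset.union_subset
        (Finset.biUnion_subset.2 fun k _ => Finset.inter_subset_left.trans he0C) he0C⟩
    have hle : ∀ k, z (ek k) ≤ z (ek' k) := by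
      intro k
      have hcond2 : FlowerCond (ek' k) {ek k} := by
        refine ⟨Finset.singleton_nonempty _, fun f hf => ?_⟩
        rw [Finset.mem_singleton] at hf
        subst hf
        simp only [Finset.erase_singleton, Finset.biUnion_empty, Finset.sdiff_empty, hek',
          Finset.inter_assoc, Finset.inter_self]
        exact hcond.2.1 k
      have hfl := hflow (ek' k) (hmem' k) {ek k}
        (Finset.singleton_subset_iff.2 (hek k)) hcond2
      unfold FlowerIneq at hfl
      have hempty : ek' k \ ({ek k} : Finset (Finset V)).biUnion id = ∅ := by
        simp [hek', Finset.sdiff_eq_empty_iff_subset, Finset.inter_subset_right]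
      rw [hempty] at hfl
      simpa using hfl
    unfold RIIneq at hri' ⊢
    rw [hsd] at hri'
    have hNfilter : (Finset.univ.filter fun k : Fin m => Nset e0 ek' k = ∅) =
        (Finset.univ.filter fun k : Fin m => Nset e0 ek k = ∅) := by
      apply Finset.filter_congr; intro k _; rw [hN]
    rw [hNfilter] at hri'
    have hsum : ∑ k : Fin m, z (ek k) ≤ ∑ k : Fin m, z (ek' k) :=
      Finset.sum_le_sum fun k _ => hle k
    linarith
end

section
/- Let C be a finite set and let G_C be the complete hypergraph with node set C, whose edges are all subsets of C of cardinality at least two. Then the multilinear polytope MP(G_C), i.e. the convex hull of {z : z_p = ∏_{v∈p} x_v for all nonempty p ⊆ C, for some x ∈ {0,1}^C}, equals the set of all z satisfying ψ_U(z) ≥ 0 for every subset U ⊆ C, where ψ_U(z) := ∑_{W ⊆ U, |W| even} z_{(C\U) ∪ W} − ∑_{W ⊆ U, |W| odd} z_{(C\U) ∪ W}, with the convention z_∅ := 1. -/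
open Finset

/-- Coordinate value with the convention `z_∅ := 1`. -/
def zval {ι : Type} [DecidableEq ι] (z : Finset ι → ℝ) (p : Finset ι) : ℝ :=
  if p = ∅ then 1 else z p

/-- The RLT function `ψ_U(z) = ∑_{W ⊆ U, |W| even} z_{(C\U) ∪ W} − ∑_{W ⊆ U, |W| odd} z_{(C\U) ∪ W}`
for the complete hypergraph on the node set `C = ι` (the whole type). -/
def psiRLT {ι : Type} [Fintype ι] [DecidableEq ι] (z : Finset ι → ℝ) (U : Finset ι) : ℝ :=
  (∑ W ∈ U.powerset.filter fun W => Even W.card, zval z ((Finset.univ \ U) ∪ W)) -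
    ∑ W ∈ U.powerset.filter fun W => Odd W.card, zval z ((Finset.univ \ U) ∪ W)

/-- The multilinear set of the complete hypergraph on node set `ι`: one coordinate `z p`
for every nonempty `p ⊆ ι` (singletons are node coordinates, larger sets edge coordinates). -/
def CompleteMultilinearSet (ι : Type) [DecidableEq ι] : Set (Finset ι → ℝ) :=
  {z | ∃ x : ι → ℝ, (∀ v, x v = 0 ∨ x v = 1) ∧
        ∀ p : Finset ι, p.Nonempty → z p = ∏ v ∈ p, x v}

section Aux

variable {ι : Type} [Fintype ι] [DecidableEq ι]

/-- `ψ_U` as a single signed sum. -/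
lemma psi_eq_signed (z : Finset ι → ℝ) (U : Finset ι) :
    psiRLT z U = ∑ W ∈ U.powerset, (-1 : ℝ) ^ W.card * zval z ((Finset.univ \ U) ∪ W) := by
  rw [psiRLT]
  have h1 : ∑ W ∈ U.powerset.filter (fun W => Even W.card), zval z ((Finset.univ \ U) ∪ W)
      = ∑ W ∈ U.powerset.filter (fun W => Even W.card),
          (-1 : ℝ) ^ W.card * zval z ((Finset.univ \ U) ∪ W) :=
    Finset.sum_congr rfl fun W hW => by
      rw [((Finset.mem_filter.1 hW).2).neg_one_pow, one_mul]
  have h2 : ∑ W ∈ U.powerset.filter (fun W => Odd W.card), zval z ((Finset.univ \ U) ∪ W)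
      = -∑ W ∈ U.powerset.filter (fun W => ¬ Even W.card),
          (-1 : ℝ) ^ W.card * zval z ((Finset.univ \ U) ∪ W) := by
    rw [← Finset.sum_neg_distrib]
    refine Finset.sum_congr (Finset.filter_congr fun W _ => ?_) fun W hW => ?_
    · exact Nat.not_even_iff_odd.symm
    · rw [(Nat.not_even_iff_odd.1 (Finset.mem_filter.1 hW).2).neg_one_pow]
      ring
  rw [h1, h2, sub_neg_eq_add, Finset.sum_filter_add_sum_filter_not]

lemma alt_prod (x : ι → ℝ) (s : Finset ι) :
    ∑ W ∈ s.powerset, (-1 : ℝ) ^ W.card * ∏ v ∈ W, x v = ∏ v ∈ s, (1 - x v) := by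
  induction s using Finset.induction_on with
  | empty => simp
  | @insert a s ha ih =>
    rw [Finset.sum_powerset_insert ha, Finset.prod_insert ha, ← ih]
    have h : ∑ t ∈ s.powerset, (-1 : ℝ) ^ (insert a t).card * ∏ v ∈ insert a t, x v
        = ∑ t ∈ s.powerset, (-(x a)) * ((-1 : ℝ) ^ t.card * ∏ v ∈ t, x v) :=
      Finset.sum_congr rfl fun t ht => by
        have hat : a ∉ t := fun hc => ha ((Finset.mem_powerset.1 ht) hc)
        rw [Finset.card_insert_of_notMem hat, Finset.prod_insert hat]
        ring
    rw [h, ← Finset.mul_sum]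
    ring

lemma alt_one (s : Finset ι) :
    ∑ W ∈ s.powerset, (-1 : ℝ) ^ W.card = if s = ∅ then 1 else 0 := by
  have := alt_prod (fun _ => (1 : ℝ)) s
  simp only [Finset.prod_const_one, mul_one, sub_self] at this
  rw [this]
  rcases eq_or_ne s ∅ with h | h
  · simp [h]
  · rw [if_neg h]
    exact Finset.prod_eq_zero (Finset.nonempty_iff_ne_empty.2 h).choose_spec rfl

/-- For points of the multilinear set, `ψ_U` is a product of nonnegative factors. -/
lemma psi_of_vertex (z : Finset ι → ℝ) (x : ι → ℝ)
    (hz : ∀ p : Finset ι, p.Nonempty → z p = ∏ v ∈ p, x v) (U : Finset ι) :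
    psiRLT z U = (∏ v ∈ Finset.univ \ U, x v) * ∏ v ∈ U, (1 - x v) := by
  have hzval : ∀ p : Finset ι, zval z p = ∏ v ∈ p, x v := by
    intro p
    rcases eq_or_ne p ∅ with h | h
    · simp [zval, h]
    · rw [zval, if_neg h, hz p (Finset.nonempty_iff_ne_empty.2 h)]
  rw [psi_eq_signed, ← alt_prod, Finset.mul_sum]
  apply Finset.sum_congr rfl
  intro W hW
  have hd : Disjoint (Finset.univ \ U) W :=
    Finset.sdiff_disjoint.mono_right (Finset.mem_powerset.1 hW)
  rw [hzval, Finset.prod_union hd]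
  ring

/-- Reindexing a double powerset sum by `(U, W) ↦ (U \ W, W)`. -/
lemma double_powerset_sum (s : Finset ι) (f : Finset ι → Finset ι → ℝ) :
    ∑ U ∈ s.powerset, ∑ W ∈ U.powerset, f U W
      = ∑ T ∈ s.powerset, ∑ W ∈ (s \ T).powerset, f (T ∪ W) W := by
  rw [Finset.sum_sigma', Finset.sum_sigma']
  refine Finset.sum_nbij' (fun q => ⟨q.1 \ q.2, q.2⟩) (fun q => ⟨q.1 ∪ q.2, q.2⟩)
    ?_ ?_ ?_ ?_ ?_
  · rintro ⟨U, W⟩ h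
    simp only [Finset.mem_sigma, Finset.mem_powerset] at h ⊢
    exact ⟨Finset.sdiff_subset.trans h.1, fun a ha =>
      Finset.mem_sdiff.2 ⟨h.1 (h.2 ha), fun hc => (Finset.mem_sdiff.1 hc).2 ha⟩⟩
  · rintro ⟨T, W⟩ h
    simp only [Finset.mem_sigma, Finset.mem_powerset] at h ⊢
    exact ⟨Finset.union_subset h.1 (h.2.trans Finset.sdiff_subset),
      Finset.subset_union_right⟩
  · rintro ⟨U, W⟩ h
    simp only [Finset.mem_sigma, Finset.mem_powerset] at h
    have : U \ W ∪ W = U := Finset.sdiff_union_of_subset h.2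
    simp [this]
  · rintro ⟨T, W⟩ h
    simp only [Finset.mem_sigma, Finset.mem_powerset] at h
    have hd : Disjoint T W := by
      have := h.2
      exact Finset.disjoint_left.2 fun a haT haW => (Finset.mem_sdiff.1 (this haW)).2 haT
    have : (T ∪ W) \ W = T := by
      rw [Finset.union_sdiff_right, Finset.sdiff_eq_self_of_disjoint hd]
    simp [this]
  · rintro ⟨U, W⟩ h
    simp only [Finset.mem_sigma, Finset.mem_powerset] at h
    have : U \ W ∪ W = U := Finset.sdiff_union_of_subset h.2
    simp [this]

/-- Möbius inversion: summing `ψ_U` over `U ⊆ C \ p` recovers `z_p`. -/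
lemma sum_psi (z : Finset ι → ℝ) (p : Finset ι) :
    ∑ U ∈ (Finset.univ \ p).powerset, psiRLT z U = zval z p := by
  classical
  have key : ∀ U W : Finset ι, W ⊆ U →
      (Finset.univ \ U) ∪ W = Finset.univ \ (U \ W) := by
    intro U W hWU
    ext a
    simp only [Finset.mem_union, Finset.mem_sdiff, Finset.mem_univ, true_and]
    constructor
    · rintro (h | h)
      · rintro ⟨hU, -⟩; exact h hU
      · rintro ⟨-, hW⟩; exact hW h
    · intro h
      by_cases hU : a ∈ U
      · right
        by_contra hW
        exact h ⟨hU, hW⟩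
      · left; exact hU
  calc ∑ U ∈ (Finset.univ \ p).powerset, psiRLT z U
      = ∑ U ∈ (Finset.univ \ p).powerset, ∑ W ∈ U.powerset,
          (-1 : ℝ) ^ W.card * zval z (Finset.univ \ (U \ W)) := by
        apply Finset.sum_congr rfl
        intro U _
        rw [psi_eq_signed]
        exact Finset.sum_congr rfl fun W hW => by
          rw [key U W (Finset.mem_powerset.1 hW)]
    _ = ∑ T ∈ (Finset.univ \ p).powerset, ∑ W ∈ ((Finset.univ \ p) \ T).powerset,
          (-1 : ℝ) ^ W.card * zval z (Finset.univ \ ((T ∪ W) \ W)) :=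
        double_powerset_sum _ _
    _ = ∑ T ∈ (Finset.univ \ p).powerset,
          (if (Finset.univ \ p) \ T = ∅ then 1 else 0) * zval z (Finset.univ \ T) := by
        apply Finset.sum_congr rfl
        intro T hT
        rw [← alt_one, Finset.sum_mul]
        apply Finset.sum_congr rfl
        intro W hW
        have hd : Disjoint T W := Finset.disjoint_left.2 fun a haT haW =>
          (Finset.mem_sdiff.1 ((Finset.mem_powerset.1 hW) haW)).2 haT
        have : (T ∪ W) \ W = T := by
          rw [Finset.union_sdiff_right, Finset.sdiff_eq_self_of_disjoint hd]
        rw [this]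
    _ = zval z p := by
        rw [Finset.sum_eq_single (Finset.univ \ p)]
        · have huniv : (Finset.univ : Finset ι) \ (Finset.univ \ p) = p := by
            ext a; simp
          rw [if_pos (Finset.sdiff_self _), one_mul, huniv]
        · intro T hT hne
          rw [if_neg, zero_mul]
          intro hc
          exact hne (le_antisymm (Finset.mem_powerset.1 hT)
            (Finset.sdiff_eq_empty_iff_subset.1 hc))
        · intro h
          exact absurd (Finset.mem_powerset.2 le_rfl) h

lemma psi_affine (y w : Finset ι → ℝ) (a b : ℝ) (hab : a + b = 1) (U : Finset ι) :
    psiRLT (a • y + b • w) U = a * psiRLT y U + b * psiRLT w U := by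
  have hzval : ∀ p : Finset ι,
      zval (a • y + b • w) p = a * zval y p + b * zval w p := by
    intro p
    rcases eq_or_ne p ∅ with h | h
    · simp [zval, h, hab]
    · simp [zval, h, Pi.add_apply, Pi.smul_apply, smul_eq_mul]
  simp only [psi_eq_signed, hzval, Finset.mul_sum]
  rw [← Finset.sum_add_distrib]
  apply Finset.sum_congr rfl
  intro W _
  ring

end Aux

/-- the multilinear polytope of the complete hypergraph is exactly the set of
points satisfying all the RLT inequalities `ψ_U(z) ≥ 0`, `U ⊆ C`. -/
theorem multilinear_polytope_complete_hypergraph_eq_RLT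
    (ι : Type) [Fintype ι] [DecidableEq ι] :
    convexHull ℝ (CompleteMultilinearSet ι) =
      {z : Finset ι → ℝ | ∀ U : Finset ι, 0 ≤ psiRLT z U} := by
  classical
  apply Set.Subset.antisymm
  · -- the hull is contained in the RLT polyhedron
    apply convexHull_min
    · rintro z ⟨x, hx01, hz⟩ U
      rw [psi_of_vertex z x hz U]
      apply mul_nonneg <;> apply Finset.prod_nonneg <;> intro v _ <;>
        rcases hx01 v with h | h <;> simp [h]
    · intro y hy w hw a b ha hb hab U
      rw [psi_affine y w a b hab U]
      exact add_nonneg (mul_nonneg ha (hy U)) (mul_nonneg hb (hw U))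
  · -- every point of the RLT polyhedron is a convex combination of vertices
    intro z hz
    set g : Finset ι → Finset ι → ℝ :=
      fun U p => if p = ∅ then z ∅ else if Disjoint p U then 1 else 0 with hg
    have hgmem : ∀ U : Finset ι, g U ∈ CompleteMultilinearSet ι := by
      intro U
      refine ⟨fun v => if v ∈ U then 0 else 1, fun v => by by_cases h : v ∈ U <;> simp [h],
        fun p hp => ?_⟩
      show (if p = ∅ then z ∅ else if Disjoint p U then 1 else 0) = _
      rw [if_neg (Finset.nonempty_iff_ne_empty.1 hp)]
      by_cases hd : Disjoint p U
      · rw [if_pos hd, Finset.prod_eq_one]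
        intro v hv
        rw [if_neg (Finset.disjoint_left.1 hd hv)]
      · rw [if_neg hd]
        obtain ⟨v, hvp, hvU⟩ := Finset.not_disjoint_iff.1 hd
        exact (Finset.prod_eq_zero hvp (by simp [hvU])).symm
    have hsum1 : ∑ U ∈ (Finset.univ : Finset ι).powerset, psiRLT z U = 1 := by
      have := sum_psi z (∅ : Finset ι)
      simpa [zval] using this
    have hcomb : ∑ U ∈ (Finset.univ : Finset ι).powerset, psiRLT z U • g U = z := by
      funext p
      rw [Finset.sum_apply]
      have hterm : ∀ U, (psiRLT z U • g U) p = psiRLT z U * g U p := fun U => rfl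
      simp only [hterm]
      rcases eq_or_ne p ∅ with h | h
      · subst h
        have hgz : ∀ U : Finset ι, g U ∅ = z ∅ := fun U => if_pos rfl
        simp only [hgz]
        rw [← Finset.sum_mul, hsum1, one_mul]
      · have hgz : ∀ U : Finset ι, g U p = if Disjoint p U then 1 else 0 :=
          fun U => if_neg h
        simp only [hgz, mul_ite, mul_one, mul_zero]
        rw [Finset.sum_ite, Finset.sum_const, smul_zero, add_zero]
        have hfilter : (Finset.univ : Finset ι).powerset.filter (fun U => Disjoint p U)
            = (Finset.univ \ p).powerset := by
          ext U
          simp only [Finset.mem_filter, Finset.mem_powerset]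
          constructor
          · rintro ⟨-, hd⟩
            intro a haU
            simp only [Finset.mem_sdiff, Finset.mem_univ, true_and]
            exact Finset.disjoint_right.1 hd haU
          · intro hU
            refine ⟨Finset.subset_univ U, Finset.disjoint_right.2 fun a haU hap => ?_⟩
            exact (Finset.mem_sdiff.1 (hU haU)).2 hap
        rw [hfilter, sum_psi z p, zval, if_neg h]
    rw [← hcomb, ← Finset.centerMass_eq_of_sum_1 _ g hsum1]
    exact Finset.centerMass_mem_convexHull _ (fun U _ => hz U) (by rw [hsum1]; norm_num)
      fun U _ => hgmem U
end

section
/- Let C be a finite set, let G_C be the complete hypergraph with node set C, and consider the set S^e(G_C) = {z ∈ S(G_C) : ∑_{∅ ≠ p ⊆ C} (−2)^{|p|−1} z_p = 0}. Then the convex hull of S^e(G_C) equals MP(G_C) ∩ {z : ∑_{∅ ≠ p ⊆ C} (−2)^{|p|−1} z_p = 0}; that is, intersecting the multilinear polytope of the complete hypergraph with the linearized parity hyperplane gives exactly the convex hull of the parity-constrained multilinear set. -/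
open Finset

/-- The linearized parity form `∑_{∅ ≠ p ⊆ C} (−2)^{|p|−1} z_p`. -/
def parityForm {ι : Type} [Fintype ι] [DecidableEq ι] (z : Finset ι → ℝ) : ℝ :=
  ∑ p ∈ Finset.univ.filter fun p : Finset ι => p.Nonempty, (-2 : ℝ) ^ (p.card - 1) * z p

/-- `parityForm` as a linear map. -/
def parityL (ι : Type) [Fintype ι] [DecidableEq ι] : (Finset ι → ℝ) →ₗ[ℝ] ℝ where
  toFun := parityForm
  map_add' a b := by
    simp [parityForm, mul_add, Finset.sum_add_distrib]
  map_smul' c a := by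
    simp only [parityForm, RingHom.id_apply, Pi.smul_apply, smul_eq_mul, Finset.mul_sum]
    exact Finset.sum_congr rfl fun p _ => by ring

lemma parityForm_mem_zero_one {ι : Type} [Fintype ι] [DecidableEq ι]
    {z : Finset ι → ℝ} (hz : z ∈ CompleteMultilinearSet ι) :
    parityForm z = 0 ∨ parityForm z = 1 := by
  obtain ⟨x, hx, hzx⟩ := hz
  have hterm : ∀ p ∈ Finset.univ.filter fun p : Finset ι => p.Nonempty,
      (∏ v ∈ p, ((-2:ℝ) * x v)) = -(2 * ((-2:ℝ) ^ (p.card - 1) * z p)) := by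
    intro p hp
    have hpne : p.Nonempty := (Finset.mem_filter.mp hp).2
    have hcard : p.card - 1 + 1 = p.card := Nat.succ_pred_eq_of_pos (Finset.card_pos.mpr hpne)
    rw [Finset.prod_mul_distrib, Finset.prod_const, ← hzx p hpne]
    calc (-2:ℝ) ^ p.card * z p = ((-2:ℝ) ^ (p.card - 1) * (-2)) * z p := by
          rw [← pow_succ, hcard]
      _ = -(2 * ((-2:ℝ) ^ (p.card - 1) * z p)) := by ring
  have key : ∏ v, ((1:ℝ) - 2 * x v) = 1 - 2 * parityForm z := by
    calc ∏ v, ((1:ℝ) - 2 * x v) = ∏ v, ((-2) * x v + 1) := by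
          exact Finset.prod_congr rfl fun v _ => by ring
      _ = ∑ p ∈ (Finset.univ : Finset ι).powerset,
            (∏ v ∈ p, (-2) * x v) * ∏ v ∈ Finset.univ \ p, (1:ℝ) := Finset.prod_add _ _ _
      _ = ∑ p : Finset ι, ∏ v ∈ p, (-2) * x v := by simp [Finset.powerset_univ]
      _ = 1 - 2 * parityForm z := by
          have hsplit : (Finset.univ : Finset (Finset ι)) =
              insert ∅ (Finset.univ.filter fun p : Finset ι => p.Nonempty) := by
            ext p
            by_cases hp : p = ∅ <;> simp [hp, Finset.nonempty_iff_ne_empty]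
          rw [hsplit, Finset.sum_insert (by simp), Finset.sum_congr rfl hterm]
          simp only [Finset.prod_empty, Finset.sum_neg_distrib, ← Finset.mul_sum, parityForm]
          ring
  have habs : ∀ v : ι, |(1:ℝ) - 2 * x v| = 1 := by
    intro v; rcases hx v with h | h <;> rw [h] <;> norm_num
  have : |∏ v, ((1:ℝ) - 2 * x v)| = 1 := by
    rw [Finset.abs_prod]; simp [habs]
  rcases abs_eq (le_of_lt one_pos) |>.mp this with h | h
  · left; rw [h] at key; linarith
  · right; rw [h] at key; linarith

/-- the convex hull of the parity-constrained multilinear set of the complete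
hypergraph equals the multilinear polytope intersected with the parity hyperplane. -/
theorem convex_hull_parity_constrained_multilinear_set
    (ι : Type) [Fintype ι] [DecidableEq ι] :
    convexHull ℝ {z ∈ CompleteMultilinearSet ι | parityForm z = 0} =
      convexHull ℝ (CompleteMultilinearSet ι) ∩ {z | parityForm z = 0} := by
  have hconv : Convex ℝ {z : Finset ι → ℝ | parityForm z = 0} := by
    have : {z : Finset ι → ℝ | parityForm z = 0} = parityL ι ⁻¹' {0} := rfl
    rw [this]
    exact (convex_singleton 0).linear_preimage (parityL ι)
  apply Set.Subset.antisymm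
  · apply Set.subset_inter
    · exact convexHull_mono (Set.sep_subset _ _)
    · exact convexHull_min (fun z hz => hz.2) hconv
  · rintro z ⟨hz, hpz⟩
    rw [_root_.convexHull_eq] at hz
    obtain ⟨κ, t, w, f, hw0, hw1, hf, hc⟩ := hz
    have hpar : ∀ i ∈ t, parityForm (f i) = 0 ∨ parityForm (f i) = 1 :=
      fun i hi => parityForm_mem_zero_one (hf i hi)
    have hcm : t.centerMass w f = ∑ i ∈ t, w i • f i :=
      Finset.centerMass_eq_of_sum_1 _ _ hw1
    have hsum : ∑ i ∈ t, w i * parityForm (f i) = 0 := by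
      have := congrArg (parityL ι) hc
      rw [hcm] at this
      simp only [map_sum, map_smul, smul_eq_mul] at this
      exact this.trans hpz
    have hzero : ∀ i ∈ t, w i * parityForm (f i) = 0 := by
      rw [← Finset.sum_eq_zero_iff_of_nonneg
        (fun i hi => mul_nonneg (hw0 i hi)
          (by rcases hpar i hi with h | h <;> rw [h] <;> norm_num))]
      exact hsum
    have hsub : ∀ i ∈ t.filter (fun i => w i ≠ 0),
        f i ∈ {z ∈ CompleteMultilinearSet ι | parityForm z = 0} := by
      intro i hi
      obtain ⟨hit, hwi⟩ := Finset.mem_filter.mp hi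
      refine ⟨hf i hit, ?_⟩
      have := hzero i hit
      rcases mul_eq_zero.mp this with h | h
      · exact absurd h hwi
      · exact h
    rw [← hc, ← Finset.centerMass_filter_ne_zero f]
    by_cases hne : (t.filter fun i => w i ≠ 0).Nonempty
    · refine Finset.centerMass_mem_convexHull _ (fun i hi => hw0 i (Finset.mem_filter.mp hi).1)
        ?_ hsub
      have : ∑ i ∈ t.filter (fun i => w i ≠ 0), w i = 1 := by
        rw [Finset.sum_filter_ne_zero]; exact hw1
      rw [this]; exact one_pos
    · exfalso
      rw [Finset.not_nonempty_iff_eq_empty] at hne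
      have : ∑ i ∈ t, w i = 0 := by
        rw [← Finset.sum_filter_ne_zero, hne, Finset.sum_empty]
      rw [hw1] at this; exact one_ne_zero this
end

section
/- For every positive integer n, the convex hull of the set of binary vectors x ∈ {0,1}^n with an even number of ones equals the polytope {x ∈ [0,1]^n : ∑_{i∈S} (1 − x_i) + ∑_{i∈[n]\S} x_i ≥ 1 for every subset S ⊆ [n] of odd cardinality}. -/
open Finset

noncomputable section ParityAux

/-- The odd-set constraint function. -/
def fS {n : ℕ} (S : Finset (Fin n)) (y : Fin n → ℝ) : ℝ :=
  ∑ i, (if i ∈ S then 1 - y i else y i)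

def Eset (n : ℕ) : Set (Fin n → ℝ) :=
  {x | (∀ i, x i = 0 ∨ x i = 1) ∧ Even ((Finset.univ.filter fun i => x i = 1).card)}

def Oset (n : ℕ) : Set (Fin n → ℝ) :=
  {x | (∀ i, x i = 0 ∨ x i = 1) ∧ Odd ((Finset.univ.filter fun i => x i = 1).card)}

def emb (n : ℕ) : Fin n ↪ Fin (n + 1) := ⟨Fin.castSucc, Fin.castSucc_injective n⟩



/-- The odd-set constraint function. -/

lemma fS_eq {n : ℕ} (S : Finset (Fin n)) (y : Fin n → ℝ) :
    fS S y = (∑ i ∈ S, (1 - y i)) + ∑ i ∈ Finset.univ \ S, y i := by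
  unfold fS
  rw [← Finset.sum_filter_add_sum_filter_not univ (· ∈ S)]
  congr 1
  · rw [show univ.filter (· ∈ S) = S by ext i; simp]
    exact Finset.sum_congr rfl fun i hi => if_pos hi
  · rw [show univ.filter (fun i => ¬ i ∈ S) = univ \ S by ext i; simp]
    refine Finset.sum_congr rfl fun i hi => if_neg ?_
    simpa using (Finset.mem_sdiff.mp hi).2

lemma term_nonneg {n : ℕ} {y : Fin n → ℝ} (hbox : ∀ i, 0 ≤ y i ∧ y i ≤ 1)
    (S : Finset (Fin n)) (i : Fin n) : 0 ≤ (if i ∈ S then 1 - y i else y i) := by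
  by_cases h : i ∈ S <;> simp [h] <;> linarith [(hbox i).1, (hbox i).2]

lemma term_le_fS {n : ℕ} {y : Fin n → ℝ} (hbox : ∀ i, 0 ≤ y i ∧ y i ≤ 1)
    (S : Finset (Fin n)) (k : Fin n) : (if k ∈ S then 1 - y k else y k) ≤ fS S y :=
  Finset.single_le_sum (fun i _ => term_nonneg hbox S i) (mem_univ k)

lemma fS_nonneg {n : ℕ} {y : Fin n → ℝ} (hbox : ∀ i, 0 ≤ y i ∧ y i ≤ 1)
    (S : Finset (Fin n)) : 0 ≤ fS S y :=
  Finset.sum_nonneg fun i _ => term_nonneg hbox S i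

lemma fS_add_fS {n : ℕ} {y : Fin n → ℝ} (hbox : ∀ i, 0 ≤ y i ∧ y i ≤ 1)
    {S E : Finset (Fin n)} (hne : S ≠ E) : 1 ≤ fS S y + fS E y := by
  have : ∃ k, (k ∈ S ∧ k ∉ E) ∨ (k ∉ S ∧ k ∈ E) := by
    by_contra h
    push_neg at h
    apply hne
    ext k
    have := h k
    tauto
  obtain ⟨k, hk⟩ := this
  have h1 := term_le_fS hbox S k
  have h2 := term_le_fS hbox E k
  rcases hk with ⟨hks, hke⟩ | ⟨hks, hke⟩ <;>
    simp [hks, hke] at h1 h2 <;> linarith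

lemma fS_combo {n : ℕ} (S : Finset (Fin n)) {x y : Fin n → ℝ} {a b : ℝ} (hab : a + b = 1) :
    fS S (a • x + b • y) = a * fS S x + b * fS S y := by
  unfold fS
  rw [Finset.mul_sum, Finset.mul_sum, ← Finset.sum_add_distrib]
  refine Finset.sum_congr rfl fun i _ => ?_
  by_cases h : i ∈ S <;>
    simp only [h, if_true, if_false, Pi.add_apply, Pi.smul_apply, smul_eq_mul] <;>
    ring_nf <;> nlinarith [hab]





@[simp] lemma emb_apply {n : ℕ} (i : Fin n) : emb n i = Fin.castSucc i := rfl

@[simp] lemma mem_map_castSucc {n : ℕ} {S : Finset (Fin n)} {i : Fin n} :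
    Fin.castSucc i ∈ S.map (emb n) ↔ i ∈ S := by
  rw [show Fin.castSucc i = emb n i from rfl]
  exact Finset.mem_map' _

@[simp] lemma last_not_mem_map {n : ℕ} (S : Finset (Fin n)) :
    Fin.last n ∉ S.map (emb n) := by
  simp only [Finset.mem_map, emb_apply]
  rintro ⟨a, -, ha⟩
  exact (Fin.castSucc_lt_last a).ne ha

lemma card_insert_last {n : ℕ} (S : Finset (Fin n)) :
    (insert (Fin.last n) (S.map (emb n))).card = S.card + 1 := by
  rw [Finset.card_insert_of_notMem (last_not_mem_map S), Finset.card_map]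

lemma fS_map {n : ℕ} (S : Finset (Fin n)) (y : Fin (n + 1) → ℝ) :
    fS (S.map (emb n)) y = fS S (fun i => y (Fin.castSucc i)) + y (Fin.last n) := by
  unfold fS
  rw [Fin.sum_univ_castSucc, if_neg (last_not_mem_map S)]
  simp only [mem_map_castSucc]

lemma fS_insert_last {n : ℕ} (S : Finset (Fin n)) (y : Fin (n + 1) → ℝ) :
    fS (insert (Fin.last n) (S.map (emb n))) y
      = fS S (fun i => y (Fin.castSucc i)) + (1 - y (Fin.last n)) := by
  unfold fS
  rw [Fin.sum_univ_castSucc, if_pos (Finset.mem_insert_self _ _)]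
  have hne : ∀ i : Fin n, (Fin.castSucc i = Fin.last n) = False :=
    fun i => eq_false (Fin.castSucc_lt_last i).ne
  simp only [Finset.mem_insert, mem_map_castSucc, hne, false_or]

-- snoc as affine map
def snocL (n : ℕ) : (Fin n → ℝ) →ₗ[ℝ] (Fin (n + 1) → ℝ) where
  toFun z := Fin.snoc z 0
  map_add' a b := by
    funext i
    cases i using Fin.lastCases <;> simp
  map_smul' c a := by
    funext i
    cases i using Fin.lastCases <;> simp

noncomputable def snocAff (n : ℕ) (r : ℝ) : (Fin n → ℝ) →ᵃ[ℝ] (Fin (n + 1) → ℝ) :=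
  AffineMap.mk' (fun z => Fin.snoc z r) (snocL n) 0 (by
    intro p
    funext i
    cases i using Fin.lastCases with
    | last => simp [snocL]
    | cast i => simp [snocL])

lemma mem_hull_snoc {n : ℕ} {s : Set (Fin n → ℝ)} {tgt : Set (Fin (n + 1) → ℝ)} (r : ℝ)
    (h : ∀ z ∈ s, (Fin.snoc z r : Fin (n + 1) → ℝ) ∈ tgt) {z : Fin n → ℝ} (hz : z ∈ convexHull ℝ s) :
    (Fin.snoc z r : Fin (n + 1) → ℝ) ∈ convexHull ℝ tgt := by
  have hmem : (Fin.snoc z r : Fin (n + 1) → ℝ) ∈ (snocAff n r) '' (convexHull ℝ s) := ⟨z, hz, rfl⟩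
  rw [AffineMap.image_convexHull] at hmem
  refine convexHull_mono ?_ hmem
  rintro - ⟨w, hw, rfl⟩
  exact h w hw

lemma card_filter_snoc {n : ℕ} (z : Fin n → ℝ) (r : ℝ) :
    (univ.filter fun i : Fin (n + 1) => (Fin.snoc z r : Fin (n + 1) → ℝ) i = 1).card
      = (univ.filter fun i => z i = 1).card + (if r = 1 then 1 else 0) := by
  rw [Finset.card_filter, Finset.card_filter, Fin.sum_univ_castSucc]
  simp





lemma snoc_binary {n : ℕ} {z : Fin n → ℝ} (hz : ∀ i, z i = 0 ∨ z i = 1) {r : ℝ}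
    (hr : r = 0 ∨ r = 1) : ∀ i, (Fin.snoc z r : Fin (n + 1) → ℝ) i = 0 ∨
      (Fin.snoc z r : Fin (n + 1) → ℝ) i = 1 := by
  intro i
  cases i using Fin.lastCases with
  | last => simpa using hr
  | cast i => simpa using hz i

lemma snoc0_E {n : ℕ} {z : Fin n → ℝ} (hz : z ∈ Eset n) :
    (Fin.snoc z 0 : Fin (n + 1) → ℝ) ∈ Eset (n + 1) := by
  refine ⟨snoc_binary hz.1 (Or.inl rfl), ?_⟩
  rw [card_filter_snoc, if_neg (by norm_num)]
  simpa using hz.2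

lemma snoc1_O_E {n : ℕ} {z : Fin n → ℝ} (hz : z ∈ Oset n) :
    (Fin.snoc z 1 : Fin (n + 1) → ℝ) ∈ Eset (n + 1) := by
  refine ⟨snoc_binary hz.1 (Or.inr rfl), ?_⟩
  rw [card_filter_snoc, if_pos rfl]
  exact hz.2.add_one

lemma snoc0_O {n : ℕ} {z : Fin n → ℝ} (hz : z ∈ Oset n) :
    (Fin.snoc z 0 : Fin (n + 1) → ℝ) ∈ Oset (n + 1) := by
  refine ⟨snoc_binary hz.1 (Or.inl rfl), ?_⟩
  rw [card_filter_snoc, if_neg (by norm_num)]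
  simpa using hz.2

lemma snoc1_E_O {n : ℕ} {z : Fin n → ℝ} (hz : z ∈ Eset n) :
    (Fin.snoc z 1 : Fin (n + 1) → ℝ) ∈ Oset (n + 1) := by
  refine ⟨snoc_binary hz.1 (Or.inr rfl), ?_⟩
  rw [card_filter_snoc, if_pos rfl]
  exact hz.2.add_one






lemma vertex_ineq {n : ℕ} {x : Fin n → ℝ} (hx : x ∈ Eset n) {S : Finset (Fin n)}
    (hS : Odd S.card) : 1 ≤ fS S x := by
  obtain ⟨hbin, hev⟩ := hx
  have hbox : ∀ i, 0 ≤ x i ∧ x i ≤ 1 := by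
    intro i; rcases hbin i with h | h <;> rw [h] <;> norm_num
  have : ∃ k, (if k ∈ S then 1 - x k else x k) = 1 := by
    by_contra hall
    push_neg at hall
    have hzero : ∀ k, (if k ∈ S then 1 - x k else x k) = 0 := by
      intro k
      have hk1 := hall k
      rcases hbin k with h | h <;> by_cases hk : k ∈ S <;>
        simp only [hk, if_true, if_false, h] at hk1 ⊢ <;> norm_num <;> norm_num at hk1
    have hSeq : univ.filter (fun i => x i = 1) = S := by
      ext i
      have := hzero i
      by_cases hi : i ∈ S <;> simp only [hi, if_true, if_false] at this <;>
        simp [hi, Finset.mem_filter]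
      · linarith
      · intro h; rw [h] at this; norm_num at this
    rw [hSeq] at hev
    exact (Nat.not_even_iff_odd.mpr hS) hev
  obtain ⟨k, hk⟩ := this
  have := term_le_fS hbox S k
  rw [hk] at this
  exact this







lemma key (n : ℕ) (hn : 1 ≤ n) : ∀ t : ℝ, 0 ≤ t → t ≤ 1 → ∀ y : Fin n → ℝ,
    (∀ i, 0 ≤ y i ∧ y i ≤ 1) →
    (∀ S : Finset (Fin n), Odd S.card → 1 - t ≤ fS S y) →
    (∀ S : Finset (Fin n), Even S.card → t ≤ fS S y) →
    ∃ u ∈ convexHull ℝ (Eset n), ∃ v ∈ convexHull ℝ (Oset n),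
      y = (1 - t) • u + t • v := by
  induction n, hn using Nat.le_induction with
  | base =>
    intro t ht0 ht1 y hbox hodd heven
    have h1 : y 0 ≤ t := by
      have := hodd {0} (by simp)
      simp [fS] at this
      linarith
    have h2 : t ≤ y 0 := by
      have := heven ∅ (by simp)
      simpa [fS] using this
    have hy : y = fun _ => t := by
      funext i
      have : i = 0 := Subsingleton.elim _ _
      rw [this]; linarith
    refine ⟨(fun _ => 0), subset_convexHull ℝ _ ?_, (fun _ => 1), subset_convexHull ℝ _ ?_, ?_⟩
    · exact ⟨fun i => Or.inl rfl, by simp⟩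
    · refine ⟨fun i => Or.inr rfl, ?_⟩
      have : (univ.filter fun i : Fin 1 => (1:ℝ) = 1) = univ := by simp
      rw [this]
      simp
    · funext i
      rw [hy]
      simp
  | succ n hn IH =>
    intro t ht0 ht1 y hbox hodd heven
    set s : ℝ := y (Fin.last n) with hs_def
    set y' : Fin n → ℝ := fun i => y (Fin.castSucc i) with hy'_def
    have hbox' : ∀ i, 0 ≤ y' i ∧ y' i ≤ 1 := fun i => hbox _
    have hs0 : 0 ≤ s := (hbox _).1
    have hs1 : s ≤ 1 := (hbox _).2
    -- lifted constraints
    have hOdd' : ∀ S : Finset (Fin n), Odd S.card →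
        1 - t - s ≤ fS S y' ∧ t + s - 1 ≤ fS S y' := by
      intro S hS
      constructor
      · have h := hodd (S.map (emb n)) (by rwa [Finset.card_map])
        rw [fS_map] at h
        linarith
      · have h := heven (insert (Fin.last n) (S.map (emb n)))
          (by rw [card_insert_last]; exact hS.add_one)
        rw [fS_insert_last] at h
        linarith
    have hEven' : ∀ E : Finset (Fin n), Even E.card →
        t - s ≤ fS E y' ∧ s - t ≤ fS E y' := by
      intro E hE
      constructor
      · have h := heven (E.map (emb n)) (by rwa [Finset.card_map])
        rw [fS_map] at h
        linarith
      · have h := hodd (insert (Fin.last n) (E.map (emb n)))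
          (by rw [card_insert_last]; exact hE.add_one)
        rw [fS_insert_last] at h
        linarith
    -- define μ
    have hEne : (univ.filter fun E : Finset (Fin n) => Even E.card).Nonempty :=
      ⟨∅, by simp⟩
    set M : ℝ := (univ.filter fun E : Finset (Fin n) => Even E.card).sup' hEne
      (fun E => 1 - fS E y') with hM_def
    set μ : ℝ := max |1 - t - s| M with hμ_def
    have hμ1 : |1 - t - s| ≤ μ := le_max_left _ _
    have hμE : ∀ E : Finset (Fin n), Even E.card → 1 - fS E y' ≤ μ := by
      intro E hE
      have hmem : E ∈ (univ.filter fun E : Finset (Fin n) => Even E.card) :=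
        Finset.mem_filter.mpr ⟨Finset.mem_univ E, hE⟩
      have h := Finset.le_sup' (fun E => 1 - fS E y') hmem
      rw [← hM_def] at h
      exact le_trans h (le_max_right _ _)
    have hμ2 : μ ≤ 1 - |t - s| := by
      apply max_le
      · rcases abs_cases (1 - t - s) with ⟨h, -⟩ | ⟨h, -⟩ <;>
          rcases abs_cases (t - s) with ⟨h', -⟩ | ⟨h', -⟩ <;> linarith
      · apply Finset.sup'_le
        intro E hE
        have hE' : Even E.card := by simpa using hE
        obtain ⟨ha, hb⟩ := hEven' E hE'
        have : |t - s| ≤ fS E y' := abs_le.mpr ⟨by linarith, by linarith⟩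
        linarith
    have hμS : ∀ S : Finset (Fin n), Odd S.card → μ ≤ fS S y' := by
      intro S hS
      apply max_le
      · obtain ⟨ha, hb⟩ := hOdd' S hS
        exact abs_le.mpr ⟨by linarith, by linarith⟩
      · apply Finset.sup'_le
        intro E hE
        have hE' : Even E.card := by simpa using hE
        have hne : S ≠ E := by
          intro h
          rw [h] at hS
          exact (Nat.not_even_iff_odd.mpr hS) hE'
        have := fS_add_fS hbox' hne
        linarith
    have hμ0 : 0 ≤ μ := le_trans (abs_nonneg _) hμ1
    have hμle1 : μ ≤ 1 := le_trans hμ2 (by linarith [abs_nonneg (t - s)])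
    -- apply IH
    obtain ⟨u', hu', v', hv', hy'⟩ := IH (1 - μ) (by linarith) (by linarith) y' hbox'
      (fun S hS => by rw [show (1:ℝ) - (1 - μ) = μ by ring]; exact hμS S hS)
      (fun E hE => by linarith [hμE E hE])
    have hy'' : ∀ i, y (Fin.castSucc i) = μ * u' i + (1 - μ) * v' i := by
      intro i
      have h := congrFun hy' i
      rw [show y' i = y (Fin.castSucc i) from rfl] at h
      simp only [Pi.add_apply, Pi.smul_apply, smul_eq_mul] at h
      linarith
    -- choose α β
    have hA : 1 - t - s ≤ μ := le_trans (le_abs_self _) hμ1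
    have hB : t + s - 1 ≤ μ := by
      have := neg_abs_le (1 - t - s); linarith
    have hC : μ ≤ 1 - (t - s) := by
      have := le_abs_self (t - s); linarith
    have hD : μ ≤ 1 - (s - t) := by
      have := neg_abs_le (t - s); linarith
    have hkey : ∃ α β : ℝ, 0 ≤ α ∧ α ≤ 1 ∧ 0 ≤ β ∧ β ≤ 1 ∧
        (1 - t) * α + t * β = s ∧ (1 - t) * (1 - α) + t * β = μ := by
      rcases eq_or_lt_of_le ht0 with h0 | h0
      · have hμv : μ = 1 - s := by
          rw [← h0] at hA hC
          linarith
        exact ⟨s, 0, hs0, hs1, le_rfl, zero_le_one, by rw [← h0]; ring,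
          by rw [← h0, hμv]; ring⟩
      rcases eq_or_lt_of_le ht1 with h1 | h1
      · have hμv : μ = s := by
          rw [h1] at hB hD
          linarith
        exact ⟨0, s, le_rfl, zero_le_one, hs0, hs1, by rw [h1]; ring,
          by rw [h1, hμv]; ring⟩
      · set β : ℝ := (μ + s - 1 + t) / (2 * t) with hβ_def
        have h2t : (0:ℝ) < 2 * t := by linarith
        have hβeq : t * β = (μ + s - 1 + t) / 2 := by
          rw [hβ_def]
          field_simp
        set α : ℝ := (s - t * β) / (1 - t) with hα_def
        have h1t : (0:ℝ) < 1 - t := by linarith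
        have hαeq : (1 - t) * α = s - t * β := by
          rw [hα_def]
          field_simp
        have hβ0 : 0 ≤ β := div_nonneg (by linarith) (le_of_lt h2t)
        have hβ1 : β ≤ 1 := by
          rw [hβ_def, div_le_one h2t]
          linarith
        have hα0 : 0 ≤ α := div_nonneg (by linarith [hβeq]) (le_of_lt h1t)
        have hα1 : α ≤ 1 := by
          rw [hα_def, div_le_one h1t]
          linarith [hβeq]
        exact ⟨α, β, hα0, hα1, hβ0, hβ1, by linarith [hαeq],
          by linear_combination (-1 : ℝ) * hαeq + 2 * hβeq⟩
    obtain ⟨α, β, hα0, hα1, hβ0, hβ1, heq1, heq2⟩ := hkey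
    refine ⟨(1 - α) • (Fin.snoc u' 0 : Fin (n+1) → ℝ) + α • (Fin.snoc v' 1 : Fin (n+1) → ℝ),
      ?_, (1 - β) • (Fin.snoc v' 0 : Fin (n+1) → ℝ) + β • (Fin.snoc u' 1 : Fin (n+1) → ℝ),
      ?_, ?_⟩
    · exact (convex_convexHull ℝ _) (mem_hull_snoc 0 (fun z hz => snoc0_E hz) hu')
        (mem_hull_snoc 1 (fun z hz => snoc1_O_E hz) hv') (by linarith) hα0 (by ring)
    · exact (convex_convexHull ℝ _) (mem_hull_snoc 0 (fun z hz => snoc0_O hz) hv')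
        (mem_hull_snoc 1 (fun z hz => snoc1_E_O hz) hu') (by linarith) hβ0 (by ring)
    · funext i
      cases i using Fin.lastCases with
      | last =>
        simp only [Pi.add_apply, Pi.smul_apply, smul_eq_mul, Fin.snoc_last]
        rw [show y (Fin.last n) = s from rfl]
        linarith [heq1]
      | cast i =>
        simp only [Pi.add_apply, Pi.smul_apply, smul_eq_mul, Fin.snoc_castSucc]
        linear_combination hy'' i + (v' i - u' i) * heq2

lemma box_convex_aux {n : ℕ} :
    Convex ℝ {x : Fin n → ℝ | (∀ i, 0 ≤ x i ∧ x i ≤ 1) ∧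
      ∀ S : Finset (Fin n), Odd S.card →
        1 ≤ (∑ i ∈ S, (1 - x i)) + ∑ i ∈ Finset.univ \ S, x i} := by
  intro x hx y hy a b ha hb hab
  refine ⟨fun i => ?_, fun S hS => ?_⟩
  · simp only [Pi.add_apply, Pi.smul_apply, smul_eq_mul]
    constructor
    · have := mul_nonneg ha (hx.1 i).1
      have := mul_nonneg hb (hy.1 i).1
      linarith
    · have h1 := mul_le_mul_of_nonneg_left (hx.1 i).2 ha
      have h2 := mul_le_mul_of_nonneg_left (hy.1 i).2 hb
      nlinarith
  · rw [← fS_eq]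
    rw [fS_combo S hab]
    have h1 : 1 ≤ fS S x := by rw [fS_eq]; exact hx.2 S hS
    have h2 : 1 ≤ fS S y := by rw [fS_eq]; exact hy.2 S hS
    nlinarith

end ParityAux

/-- Jeroslow: the parity polytope, i.e. the convex hull of the binary vectors
with an even number of ones, is described by the box constraints together with the odd-set
inequalities `∑_{i ∈ S} (1 − x_i) + ∑_{i ∉ S} x_i ≥ 1` for all odd-cardinality `S ⊆ [n]`. -/
theorem parity_polytope_description (n : ℕ) (hn : 0 < n) :
    convexHull ℝ {x : Fin n → ℝ | (∀ i, x i = 0 ∨ x i = 1) ∧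
        Even ((Finset.univ.filter fun i => x i = 1).card)} =
      {x : Fin n → ℝ | (∀ i, 0 ≤ x i ∧ x i ≤ 1) ∧
        ∀ S : Finset (Fin n), Odd S.card →
          1 ≤ (∑ i ∈ S, (1 - x i)) + ∑ i ∈ Finset.univ \ S, x i} := by
  apply Set.Subset.antisymm
  · apply convexHull_min
    · rintro x ⟨hbin, hev⟩
      refine ⟨fun i => by rcases hbin i with h | h <;> rw [h] <;> norm_num, fun S hS => ?_⟩
      have := vertex_ineq ⟨hbin, hev⟩ hS
      rwa [fS_eq] at this
    · exact box_convex_aux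
  · intro x hx
    obtain ⟨hbox, hineq⟩ := hx
    obtain ⟨u, hu, v, hv, hxuv⟩ := key n hn 0 le_rfl zero_le_one x hbox
      (fun S hS => by rw [fS_eq]; linarith [hineq S hS])
      (fun S _ => fS_nonneg hbox S)
    have hxu : x = u := by
      rw [hxuv]
      funext i
      simp
    rw [hxu]
    exact hu
end

section
/- Let C be a finite set, let G_C be the complete hypergraph with node set C, and let H_C := {z : ∑_{∅ ≠ p ⊆ C} (−2)^{|p|−1} z_p = 0}. Then the projection of MP(G_C) ∩ H_C onto the node coordinates (z_{{v}})_{v∈C} equals the parity polytope on C, i.e. the convex hull of {x ∈ {0,1}^C : ∑_{v∈C} x_v is even}. -/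
open Finset

variable {ι : Type} [Fintype ι] [DecidableEq ι]


lemma parityForm_add (z w : Finset ι → ℝ) :
    parityForm (z + w) = parityForm z + parityForm w := by
  simp [parityForm, mul_add, Finset.sum_add_distrib]

lemma parityForm_smul (c : ℝ) (z : Finset ι → ℝ) :
    parityForm (c • z) = c * parityForm z := by
  simp only [parityForm, Pi.smul_apply, smul_eq_mul, Finset.mul_sum]
  exact Finset.sum_congr rfl fun p _ => by ring

lemma parityForm_sum {κ : Type} (t : Finset κ) (w : κ → ℝ) (g : κ → Finset ι → ℝ) :
    parityForm (∑ i ∈ t, w i • g i) = ∑ i ∈ t, w i * parityForm (g i) := by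
  induction t using Finset.cons_induction with
  | empty => simp [parityForm]
  | cons a s h ih =>
    rw [Finset.sum_cons, Finset.sum_cons, parityForm_add, parityForm_smul, ih]

lemma parityForm_lift (x : ι → ℝ) (hx : ∀ v, x v = 0 ∨ x v = 1) (z : Finset ι → ℝ)
    (hz : ∀ p : Finset ι, p.Nonempty → z p = ∏ v ∈ p, x v) :
    parityForm z = if Even ((Finset.univ.filter fun v => x v = 1).card) then 0 else 1 := by
  have key : ∏ v, ((-2) * x v + 1) =
      ∑ p : Finset ι, ((-2 : ℝ)) ^ p.card * ∏ v ∈ p, x v := by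
    rw [Finset.prod_add]
    rw [← Finset.powerset_univ]
    refine Finset.sum_congr rfl fun p _ => ?_
    rw [Finset.prod_const_one, mul_one, Finset.prod_mul_distrib, Finset.prod_const]
  have split : ∑ p : Finset ι, ((-2 : ℝ)) ^ p.card * ∏ v ∈ p, x v
      = 1 + (-2) * parityForm z := by
    rw [← Finset.sum_filter_add_sum_filter_not Finset.univ (fun p : Finset ι => p.Nonempty)]
    have hempty : (Finset.univ.filter fun p : Finset ι => ¬ p.Nonempty) = {∅} := by
      ext p; simp [Finset.not_nonempty_iff_eq_empty]
    rw [hempty]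
    simp only [Finset.sum_singleton, Finset.card_empty, pow_zero, Finset.prod_empty, mul_one]
    rw [parityForm, Finset.mul_sum, add_comm]
    congr 1
    refine Finset.sum_congr rfl fun p hp => ?_
    simp only [Finset.mem_filter] at hp
    rw [hz p hp.2]
    have h1 : 1 ≤ p.card := Finset.card_pos.2 hp.2
    have hpow : (-2 : ℝ) ^ p.card = (-2) * (-2) ^ (p.card - 1) := by
      conv_lhs => rw [← Nat.sub_add_cancel h1]
      rw [pow_succ]; ring
    rw [hpow]; ring
  have sign : ∏ v, ((-2 : ℝ) * x v + 1) =
      (-1 : ℝ) ^ ((Finset.univ.filter fun v => x v = 1).card) := by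
    have : ∀ v, (-2 : ℝ) * x v + 1 = if x v = 1 then (-1 : ℝ) else 1 := by
      intro v; rcases hx v with h | h <;> simp [h] <;> ring
    rw [Finset.prod_congr rfl fun v _ => this v, ← Finset.prod_filter, Finset.prod_const]
  have main : (-1 : ℝ) ^ ((Finset.univ.filter fun v => x v = 1).card)
      = 1 + (-2) * parityForm z := by rw [← sign, key, split]
  rcases Nat.even_or_odd ((Finset.univ.filter fun v => x v = 1).card) with h | h
  · rw [h.neg_one_pow] at main; simp [h]; linarith
  · rw [h.neg_one_pow] at main; simp [Nat.not_even_iff_odd.2 h]; linarith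

/-- projecting `MP(G_C) ∩ H_C` onto the node coordinates yields exactly the
parity polytope, the convex hull of the binary vectors with an even number of ones. -/
theorem projection_of_parity_constrained_multilinear_polytope
    (ι : Type) [Fintype ι] [DecidableEq ι] :
    (fun z : Finset ι → ℝ => fun v : ι => z {v}) ''
        (convexHull ℝ (CompleteMultilinearSet ι) ∩ {z | parityForm z = 0}) =
      convexHull ℝ {x : ι → ℝ | (∀ v, x v = 0 ∨ x v = 1) ∧
        Even ((Finset.univ.filter fun v => x v = 1).card)} := by
  classical
  set f : (Finset ι → ℝ) →ₗ[ℝ] (ι → ℝ) :=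
    LinearMap.pi (fun v => LinearMap.proj ({v} : Finset ι)) with hf
  have hfz : ∀ z : Finset ι → ℝ, f z = fun v => z {v} := fun z => rfl
  set E : Set (ι → ℝ) := {x : ι → ℝ | (∀ v, x v = 0 ∨ x v = 1) ∧
      Even ((Finset.univ.filter fun v => x v = 1).card)} with hE
  set lift : (ι → ℝ) → (Finset ι → ℝ) := fun x p => ∏ v ∈ p, x v with hlift
  apply Set.Subset.antisymm
  · rintro _ ⟨z, ⟨hzc, hz0⟩, rfl⟩
    rw [_root_.convexHull_eq] at hzc
    obtain ⟨κ, t, w, g, hw0, hw1, hgs, hcm⟩ := hzc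
    -- parityForm of each g i is 0 or 1
    have hpf : ∀ i ∈ t, parityForm (g i) = 0 ∨ parityForm (g i) = 1 := by
      intro i hi
      obtain ⟨x, hx, hgx⟩ := hgs i hi
      rw [parityForm_lift x hx (g i) hgx]
      split <;> simp
    have hzsum : z = ∑ i ∈ t, w i • g i := by
      rw [← hcm, Finset.centerMass_eq_of_sum_1 _ _ hw1]
    have hpfz : parityForm z = ∑ i ∈ t, w i * parityForm (g i) := by
      rw [hzsum, parityForm_sum]
    have hz0' : parityForm z = 0 := hz0
    have hterm : ∀ i ∈ t, w i * parityForm (g i) = 0 := by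
      rw [hpfz] at hz0'
      intro i hi
      refine (Finset.sum_eq_zero_iff_of_nonneg ?_).1 hz0' i hi
      intro j hj
      rcases hpf j hj with h | h
      · simp [h]
      · rw [h, mul_one]; exact hw0 j hj
    -- restrict to nonzero weights
    set t' := t.filter (fun i => w i ≠ 0) with ht'
    have hw1' : ∑ i ∈ t', w i = 1 := by
      rw [ht', Finset.sum_filter_ne_zero, hw1]
    have hmem : ∀ i ∈ t', f (g i) ∈ E := by
      intro i hi
      rw [ht', Finset.mem_filter] at hi
      obtain ⟨x, hx, hgx⟩ := hgs i hi.1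
      have hfx : f (g i) = x := by
        funext v
        show g i {v} = x v
        rw [hgx {v} (Finset.singleton_nonempty v)]; simp
      rw [hfx]
      refine ⟨hx, ?_⟩
      have := hterm i hi.1
      have hpf0 : parityForm (g i) = 0 := by
        rcases mul_eq_zero.1 this with h | h
        · exact absurd h hi.2
        · exact h
      rw [parityForm_lift x hx (g i) hgx] at hpf0
      by_contra hodd
      simp [hodd] at hpf0
    have hfzsum : f z = ∑ i ∈ t', w i • f (g i) := by
      rw [hzsum, map_sum]
      simp only [map_smul]
      rw [ht']
      rw [Finset.sum_filter_of_ne]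
      intro i hi h
      intro hw
      exact h (by rw [hw, zero_smul])
    have : f z ∈ convexHull ℝ E := by
      rw [hfzsum, ← Finset.centerMass_eq_of_sum_1 _ _ hw1']
      exact Finset.centerMass_mem_convexHull t'
        (fun i hi => hw0 i (Finset.mem_filter.1 hi).1) (by rw [hw1']; norm_num) hmem
    rw [hfz] at this
    exact this
  · -- ⊇
    have himg : E ⊆ f '' (convexHull ℝ (CompleteMultilinearSet ι) ∩ {z | parityForm z = 0}) := by
      intro x hx
      refine ⟨lift x, ⟨subset_convexHull ℝ _ ⟨x, hx.1, fun p _ => rfl⟩, ?_⟩, ?_⟩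
      · show parityForm (lift x) = 0
        rw [parityForm_lift x hx.1 (lift x) (fun p _ => rfl)]
        simp [hx.2]
      · funext v; rw [hfz]; show (∏ v' ∈ ({v} : Finset ι), x v') = x v; simp
    have hconv : Convex ℝ (f '' (convexHull ℝ (CompleteMultilinearSet ι) ∩ {z | parityForm z = 0})) := by
      apply Convex.linear_image
      apply Convex.inter (convex_convexHull ℝ _)
      intro a ha b hb s u hs hu hsu
      simp only [Set.mem_setOf_eq] at ha hb ⊢
      rw [parityForm_add, parityForm_smul, parityForm_smul, ha, hb]
      ring
    exact convexHull_min himg hconv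
end
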